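/- arXiv:1805.09464 — 2 statements merged into one kernel-verified Lean document; each statement's English description precedes it below -/
import Mathlib

section
/- Let m, n ≥ 1 and τ > 0. For all real m×n matrices X and Y, the function g(t) = σ(X + t·Y, τ) is twice differentiable on ℝ and its second derivative satisfies 0 ≤ g''(t) ≤ |Y|₂²/τ for all t ∈ ℝ. -/
open Finset

/-- The logsumexp smoothing of the entrywise ℓ∞-norm. -/
noncomputable def logSumExp {m n : ℕ} (τ : ℝ) (X : Matrix (Fin m) (Fin n) ℝ) : ℝ :=
  τ * Real.log ((∑ i, ∑ j, (Real.exp (X i j / τ) + Real.exp (-X i j / τ))) / (2 * m * n))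

/-- Frobenius norm of a real m×n matrix. -/
noncomputable def frobNorm {m n : ℕ} (A : Matrix (Fin m) (Fin n) ℝ) : ℝ :=
  Real.sqrt (∑ i, ∑ j, (A i j) ^ 2)

namespace LSEAux

noncomputable def sgn (b : Bool) : ℝ := if b then 1 else -1

noncomputable def w {m n : ℕ} (τ : ℝ) (X Y : Matrix (Fin m) (Fin n) ℝ) (t : ℝ)
    (p : (Fin m × Fin n) × Bool) : ℝ :=
  Real.exp (sgn p.2 * (X p.1.1 p.1.2 + t * Y p.1.1 p.1.2) / τ)

noncomputable def cf {m n : ℕ} (τ : ℝ) (Y : Matrix (Fin m) (Fin n) ℝ)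
    (p : (Fin m × Fin n) × Bool) : ℝ :=
  sgn p.2 * Y p.1.1 p.1.2 / τ

noncomputable def S {m n : ℕ} (τ : ℝ) (X Y : Matrix (Fin m) (Fin n) ℝ) (t : ℝ) : ℝ :=
  ∑ p, w τ X Y t p

noncomputable def S1 {m n : ℕ} (τ : ℝ) (X Y : Matrix (Fin m) (Fin n) ℝ) (t : ℝ) : ℝ :=
  ∑ p, cf τ Y p * w τ X Y t p

noncomputable def S2 {m n : ℕ} (τ : ℝ) (X Y : Matrix (Fin m) (Fin n) ℝ) (t : ℝ) : ℝ :=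
  ∑ p, (cf τ Y p) ^ 2 * w τ X Y t p

variable {m n : ℕ} (τ : ℝ) (X Y : Matrix (Fin m) (Fin n) ℝ)

lemma Spos (hm : 1 ≤ m) (hn : 1 ≤ n) (t : ℝ) : 0 < S τ X Y t := by
  haveI : NeZero m := ⟨by omega⟩
  haveI : NeZero n := ⟨by omega⟩
  exact Finset.sum_pos (fun p _ => Real.exp_pos _) Finset.univ_nonempty

lemma hlse (t : ℝ) :
    logSumExp τ (X + t • Y) = τ * Real.log (S τ X Y t / (2 * m * n)) := by
  unfold logSumExp S w
  rw [Fintype.sum_prod_type, Fintype.sum_prod_type]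
  congr 3
  refine Finset.sum_congr rfl fun i _ => Finset.sum_congr rfl fun j _ => ?_
  simp [Fintype.sum_bool, sgn, Matrix.add_apply, Matrix.smul_apply, smul_eq_mul,
    neg_one_mul, one_mul, neg_div]
lemma hS (t : ℝ) : HasDerivAt (fun s => S τ X Y (s : ℝ)) (S1 τ X Y t) t := by
  unfold S S1
  apply HasDerivAt.fun_sum
  intro p _
  have h : HasDerivAt (fun s : ℝ => sgn p.2 * (X p.1.1 p.1.2 + s * Y p.1.1 p.1.2) / τ)
      (sgn p.2 * (1 * Y p.1.1 p.1.2) / τ) t :=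
    ((((hasDerivAt_id t).mul_const _).const_add _).const_mul _).div_const τ
  have := h.exp
  unfold w cf
  refine this.congr_deriv ?_
  ring

lemma hS1 (t : ℝ) : HasDerivAt (fun s => S1 τ X Y (s : ℝ)) (S2 τ X Y t) t := by
  unfold S1 S2
  apply HasDerivAt.fun_sum
  intro p _
  have h : HasDerivAt (fun s : ℝ => sgn p.2 * (X p.1.1 p.1.2 + s * Y p.1.1 p.1.2) / τ)
      (sgn p.2 * (1 * Y p.1.1 p.1.2) / τ) t :=
    ((((hasDerivAt_id t).mul_const _).const_add _).const_mul _).div_const τ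
  have := h.exp.const_mul (cf τ Y p)
  unfold w cf at this ⊢
  refine this.congr_deriv ?_
  ring

lemma cf_sq (p : (Fin m × Fin n) × Bool) :
    (cf τ Y p) ^ 2 = (Y p.1.1 p.1.2) ^ 2 / τ ^ 2 := by
  obtain ⟨q, b⟩ := p
  cases b <;> simp [cf, sgn] <;> ring

lemma entry_sq_le (p : (Fin m × Fin n) × Bool) :
    (Y p.1.1 p.1.2) ^ 2 ≤ ∑ i, ∑ j, (Y i j) ^ 2 := by
  have h1 : (Y p.1.1 p.1.2) ^ 2 ≤ ∑ j, (Y p.1.1 j) ^ 2 :=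
    Finset.single_le_sum (f := fun j => (Y p.1.1 j) ^ 2)
      (fun _ _ => sq_nonneg _) (Finset.mem_univ _)
  have h2 : ∑ j, (Y p.1.1 j) ^ 2 ≤ ∑ i, ∑ j, (Y i j) ^ 2 :=
    Finset.single_le_sum (f := fun i => ∑ j, (Y i j) ^ 2)
      (fun i _ => Finset.sum_nonneg fun _ _ => sq_nonneg _) (Finset.mem_univ _)
  linarith

lemma cauchy (t : ℝ) : (S1 τ X Y t) ^ 2 ≤ S τ X Y t * S2 τ X Y t := by
  have hw : ∀ p : (Fin m × Fin n) × Bool,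
      Real.sqrt (w τ X Y t p) * Real.sqrt (w τ X Y t p) = w τ X Y t p :=
    fun p => Real.mul_self_sqrt (Real.exp_pos _).le
  have cs := Finset.sum_mul_sq_le_sq_mul_sq Finset.univ
    (fun p => Real.sqrt (w τ X Y t p))
    (fun p => cf τ Y p * Real.sqrt (w τ X Y t p))
  calc (S1 τ X Y t) ^ 2
      = (∑ p, Real.sqrt (w τ X Y t p) * (cf τ Y p * Real.sqrt (w τ X Y t p))) ^ 2 := by
        unfold S1
        congr 1
        refine Finset.sum_congr rfl fun p _ => ?_
        rw [show Real.sqrt (w τ X Y t p) * (cf τ Y p * Real.sqrt (w τ X Y t p))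
            = cf τ Y p * (Real.sqrt (w τ X Y t p) * Real.sqrt (w τ X Y t p)) by ring, hw]
    _ ≤ (∑ p, Real.sqrt (w τ X Y t p) ^ 2) * (∑ p, (cf τ Y p * Real.sqrt (w τ X Y t p)) ^ 2) := cs
    _ = S τ X Y t * S2 τ X Y t := by
        unfold S S2
        congr 1
        · exact Finset.sum_congr rfl fun p _ => by rw [sq, hw]
        · refine Finset.sum_congr rfl fun p _ => ?_
          rw [mul_pow, sq (Real.sqrt _), hw]

end LSEAux

/-- For m, n ≥ 1 and τ > 0 and matrices X, Y, the function
`g(t) = σ(X + t·Y, τ)` is twice differentiable on ℝ and its second derivative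
satisfies `0 ≤ g''(t) ≤ |Y|₂²/τ` for all t. -/
theorem logSumExp_second_deriv_bounds (m n : ℕ) (hm : 1 ≤ m) (hn : 1 ≤ n)
    (τ : ℝ) (hτ : 0 < τ) (X Y : Matrix (Fin m) (Fin n) ℝ) :
    ∃ g' g'' : ℝ → ℝ,
      (∀ t : ℝ, HasDerivAt (fun s : ℝ => logSumExp τ (X + s • Y)) (g' t) t) ∧
      (∀ t : ℝ, HasDerivAt g' (g'' t) t) ∧
      (∀ t : ℝ, 0 ≤ g'' t ∧ g'' t ≤ (frobNorm Y) ^ 2 / τ) := by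
  have hSpos : ∀ t, 0 < LSEAux.S τ X Y t := LSEAux.Spos τ X Y hm hn
  have hm' : (0:ℝ) < m := by exact_mod_cast hm
  have hn' : (0:ℝ) < n := by exact_mod_cast hn
  have hc : (0:ℝ) < 2 * m * n := by positivity
  refine ⟨fun t => τ * (LSEAux.S1 τ X Y t / LSEAux.S τ X Y t),
    fun t => τ * ((LSEAux.S2 τ X Y t * LSEAux.S τ X Y t -
      LSEAux.S1 τ X Y t * LSEAux.S1 τ X Y t) / (LSEAux.S τ X Y t) ^ 2), ?_, ?_, ?_⟩
  · intro t
    have hne : LSEAux.S τ X Y t / (2 * m * n) ≠ 0 := (div_pos (hSpos t) hc).ne'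
    have h := (((LSEAux.hS τ X Y t).div_const (2 * m * n)).log hne).const_mul τ
    have heq : (fun s : ℝ => τ * Real.log (LSEAux.S τ X Y s / (2 * m * n)))
        = fun s : ℝ => logSumExp τ (X + s • Y) := by
      funext s; exact (LSEAux.hlse τ X Y s).symm
    rw [heq] at h
    refine h.congr_deriv ?_
    rw [div_div_div_cancel_right₀ hc.ne']
  · intro t
    exact ((LSEAux.hS1 τ X Y t).div (LSEAux.hS τ X Y t) (hSpos t).ne').const_mul τ
  · intro t
    set s := LSEAux.S τ X Y t with hs
    set s1 := LSEAux.S1 τ X Y t with hs1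
    set s2 := LSEAux.S2 τ X Y t with hs2
    have hcs : s1 ^ 2 ≤ s * s2 := LSEAux.cauchy τ X Y t
    have hF : (frobNorm Y) ^ 2 = ∑ i, ∑ j, (Y i j) ^ 2 := by
      unfold frobNorm
      exact Real.sq_sqrt (Finset.sum_nonneg fun i _ => Finset.sum_nonneg fun j _ => sq_nonneg _)
    have hFnn : 0 ≤ (frobNorm Y) ^ 2 := sq_nonneg _
    constructor
    · apply mul_nonneg hτ.le
      apply div_nonneg _ (sq_nonneg _)
      nlinarith
    · have hs2b : s2 ≤ (frobNorm Y) ^ 2 / τ ^ 2 * s := by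
        rw [hs2, hs, LSEAux.S2, LSEAux.S, Finset.mul_sum]
        refine Finset.sum_le_sum fun p _ => ?_
        apply mul_le_mul_of_nonneg_right _ (Real.exp_pos _).le
        rw [LSEAux.cf_sq]
        apply div_le_div_of_nonneg_right ?_ (by positivity)
        · rw [hF]; exact LSEAux.entry_sq_le Y p
      have h1 : τ * ((s2 * s - s1 * s1) / s ^ 2) ≤ τ * (s2 / s) := by
        apply mul_le_mul_of_nonneg_left _ hτ.le
        rw [div_le_div_iff₀ (pow_pos (hSpos t) 2) (hSpos t)]
        nlinarith [sq_nonneg s1, (hSpos t)]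
      have h2 : τ * (s2 / s) ≤ (frobNorm Y) ^ 2 / τ := by
        have h3 : s2 / s ≤ (frobNorm Y) ^ 2 / τ ^ 2 := (div_le_iff₀ (hSpos t)).mpr hs2b
        calc τ * (s2 / s) ≤ τ * ((frobNorm Y) ^ 2 / τ ^ 2) :=
              mul_le_mul_of_nonneg_left h3 hτ.le
          _ = (frobNorm Y) ^ 2 / τ := by field_simp
      linarith
end

section
/- Let m, n ≥ 1 and τ > 0, and for a real m×n matrix X let G(X) be the m×n matrix with entries G(X)_{ij} = (e^{X_{ij}/τ} − e^{−X_{ij}/τ}) / (Σ_{k,l} (e^{X_{kl}/τ} + e^{−X_{kl}/τ})) (the gradient of the logsumexp function). Then G is Lipschitz with constant 1/τ in the Frobenius norm: for all real m×n matrices X, Y, |G(X) − G(Y)|₂ ≤ (1/τ)·|X − Y|₂. -/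
open Finset

/-- The gradient of the logsumexp function:
`G(X)_{ij} = (e^{X_{ij}/τ} − e^{−X_{ij}/τ}) / (Σ_{k,l} (e^{X_{kl}/τ} + e^{−X_{kl}/τ}))`. -/
noncomputable def logSumExpGrad {m n : ℕ} (τ : ℝ) (X : Matrix (Fin m) (Fin n) ℝ) :
    Matrix (Fin m) (Fin n) ℝ :=
  fun i j => (Real.exp (X i j / τ) - Real.exp (-X i j / τ)) /
    (∑ k, ∑ l, (Real.exp (X k l / τ) + Real.exp (-X k l / τ)))


open Finset Real

section aux

variable {ι : Type*} [Fintype ι]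

/-- Key quadratic bound. -/
lemma key_quad_bound (a b v : ι → ℝ) (ha : ∀ p, 0 < a p)
    (hba : ∀ p, |b p| ≤ a p) (hsum : ∑ p, a p = 1) :
    ∑ p, (a p * v p - b p * (∑ q, b q * v q)) ^ 2 ≤ ∑ p, (v p) ^ 2 := by
  set S := ∑ q, b q * v q with hS
  have ha1 : ∀ p, a p ≤ 1 := by
    intro p
    rw [← hsum]
    exact Finset.single_le_sum (fun q _ => (ha q).le) (Finset.mem_univ p)
  set c : ι → ℝ := fun p => b p / a p with hc
  have hbc : ∀ p, b p = c p * a p := fun p => by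
    exact (div_mul_cancel₀ (b p) (ha p).ne').symm
  have hc1 : ∀ p, c p ^ 2 ≤ 1 := by
    intro p
    have h : |c p| ≤ 1 := by
      rw [hc]
      simp only
      rw [abs_div, abs_of_pos (ha p)]
      exact div_le_one_of_le₀ (hba p) (ha p).le
    nlinarith [abs_nonneg (c p), sq_abs (c p)]
  have expand : ∑ p, a p * (v p - c p * S) ^ 2
      = (∑ p, a p * v p ^ 2) - 2 * S * S + S ^ 2 * (∑ p, a p * c p ^ 2) := by
    have h : ∀ p, a p * (v p - c p * S) ^ 2
        = a p * v p ^ 2 - 2 * S * (b p * v p) + S ^ 2 * (a p * c p ^ 2) := fun p => by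
      rw [hbc p]; ring
    simp_rw [h]
    rw [Finset.sum_add_distrib, Finset.sum_sub_distrib, ← Finset.mul_sum, ← Finset.mul_sum, ← hS]
  have hK : ∑ p, a p * c p ^ 2 ≤ 1 := by
    rw [← hsum]
    exact Finset.sum_le_sum fun p _ => by nlinarith [ha p, hc1 p]
  have hAV : ∑ p, a p * v p ^ 2 ≤ ∑ p, v p ^ 2 :=
    Finset.sum_le_sum fun p _ => by nlinarith [ha1 p, ha p, sq_nonneg (v p)]
  calc ∑ p, (a p * v p - b p * S) ^ 2
      = ∑ p, (a p) ^ 2 * (v p - c p * S) ^ 2 := by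
        refine Finset.sum_congr rfl fun p _ => ?_
        rw [hbc p]; ring
    _ ≤ ∑ p, a p * (v p - c p * S) ^ 2 := by
        refine Finset.sum_le_sum fun p _ => ?_
        have h1 : (a p) ^ 2 ≤ a p := by nlinarith [ha p, ha1 p]
        exact mul_le_mul_of_nonneg_right h1 (sq_nonneg _)
    _ ≤ ∑ p, v p ^ 2 := by
        rw [expand]
        nlinarith [sq_nonneg S, hK, hAV]

end aux


open Finset Real

section aux

variable {ι : Type*} [Fintype ι]

/-- Denominator. -/
noncomputable def Dfun (τ : ℝ) (w : ι → ℝ) : ℝ :=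
  ∑ q, (Real.exp (w q / τ) + Real.exp (-w q / τ))

/-- Gradient function over a general index type. -/
noncomputable def gfun (τ : ℝ) (w : ι → ℝ) (p : ι) : ℝ :=
  (Real.exp (w p / τ) - Real.exp (-w p / τ)) / Dfun τ w

lemma grad_lip [Nonempty ι] (τ : ℝ) (hτ : 0 < τ) (x y : ι → ℝ) :
    Real.sqrt (∑ p, (gfun τ x p - gfun τ y p) ^ 2)
      ≤ (1 / τ) * Real.sqrt (∑ p, (x p - y p) ^ 2) := by
  classical
  set u : ι → ℝ := fun p => gfun τ x p - gfun τ y p with hu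
  set v : ι → ℝ := fun p => x p - y p with hv
  set z : ℝ → ι → ℝ := fun t p => y p + t * v p with hz
  have hDpos : ∀ w : ι → ℝ, 0 < Dfun τ w := fun w =>
    Finset.sum_pos (fun q _ => by positivity) Finset.univ_nonempty
  set φ : ℝ → ℝ := fun t => ∑ p, u p * gfun τ (z t) p with hφ
  set φ' : ℝ → ℝ := fun t => ∑ p, u p *
      (((Real.exp (z t p / τ) * (v p / τ) - Real.exp (-z t p / τ) * (-v p / τ)) * Dfun τ (z t)
        - (Real.exp (z t p / τ) - Real.exp (-z t p / τ)) *
          (∑ q, (Real.exp (z t q / τ) * (v q / τ) + Real.exp (-z t q / τ) * (-v q / τ))))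
        / (Dfun τ (z t)) ^ 2) with hφ'def
  set C : ℝ := (1 / τ) * (Real.sqrt (∑ p, u p ^ 2) * Real.sqrt (∑ p, v p ^ 2)) with hC
  -- derivative of φ
  have hzp : ∀ (p : ι) (t : ℝ), HasDerivAt (fun t => z t p / τ) (v p / τ) t := by
    intro p t
    exact ((hasDerivAt_mul_const (v p)).const_add (y p)).div_const τ
  have hzn : ∀ (p : ι) (t : ℝ), HasDerivAt (fun t => -z t p / τ) (-v p / τ) t := by
    intro p t
    exact (((hasDerivAt_mul_const (v p)).const_add (y p)).neg).div_const τ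
  have he1 : ∀ (p : ι) (t : ℝ),
      HasDerivAt (fun t => Real.exp (z t p / τ)) (Real.exp (z t p / τ) * (v p / τ)) t :=
    fun p t => (hzp p t).exp
  have he2 : ∀ (p : ι) (t : ℝ),
      HasDerivAt (fun t => Real.exp (-z t p / τ)) (Real.exp (-z t p / τ) * (-v p / τ)) t :=
    fun p t => (hzn p t).exp
  have hD : ∀ t : ℝ, HasDerivAt (fun t => Dfun τ (z t))
      (∑ q, (Real.exp (z t q / τ) * (v q / τ) + Real.exp (-z t q / τ) * (-v q / τ))) t := by
    intro t
    exact HasDerivAt.fun_sum fun q _ => (he1 q t).add (he2 q t)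
  have hderiv : ∀ t : ℝ, HasDerivAt φ (φ' t) t := by
    intro t
    refine HasDerivAt.fun_sum fun p _ => ?_
    exact (((he1 p t).sub (he2 p t)).div (hD t) (hDpos (z t)).ne').const_mul (u p)
  -- bound on the derivative
  have hbound : ∀ t : ℝ, |φ' t| ≤ C := by
    intro t
    set Dt : ℝ := Dfun τ (z t) with hDt
    have hDt0 : (0:ℝ) < Dt := hDpos (z t)
    set a : ι → ℝ := fun p => (Real.exp (z t p / τ) + Real.exp (-z t p / τ)) / Dt with ha'
    set b : ι → ℝ := fun p => (Real.exp (z t p / τ) - Real.exp (-z t p / τ)) / Dt with hb'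
    have ha : ∀ p, 0 < a p := fun p => by positivity
    have hba : ∀ p, |b p| ≤ a p := by
      intro p
      rw [hb', ha']
      simp only
      rw [abs_div, abs_of_pos hDt0]
      have hnum : |Real.exp (z t p / τ) - Real.exp (-z t p / τ)|
          ≤ Real.exp (z t p / τ) + Real.exp (-z t p / τ) :=
        abs_le.mpr ⟨by nlinarith [Real.exp_pos (z t p / τ), Real.exp_pos (-z t p / τ)],
          by nlinarith [Real.exp_pos (z t p / τ), Real.exp_pos (-z t p / τ)]⟩
      gcongr
    have hsa : ∑ p, a p = 1 := by
      rw [ha']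
      simp only
      rw [← Finset.sum_div]
      exact div_self (hDpos (z t)).ne'
    set w : ι → ℝ := fun p => a p * v p - b p * (∑ q, b q * v q) with hw'
    have hform : φ' t = (1 / τ) * ∑ p, u p * w p := by
      rw [hφ'def, Finset.mul_sum]
      refine Finset.sum_congr rfl fun p _ => ?_
      simp only [hw', hb', ha']
      have hsq : ∑ q, (Real.exp (z t q / τ) - Real.exp (-z t q / τ)) / Dt * v q
          = (∑ q, (Real.exp (z t q / τ) - Real.exp (-z t q / τ)) * v q) / Dt := by
        rw [Finset.sum_div]
        exact Finset.sum_congr rfl fun q _ => by ring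
      rw [hsq]
      have hsq2 : ∑ q, (Real.exp (z t q / τ) * (v q / τ) + Real.exp (-z t q / τ) * (-v q / τ))
          = (∑ q, (Real.exp (z t q / τ) - Real.exp (-z t q / τ)) * v q) / τ := by
        rw [Finset.sum_div]
        exact Finset.sum_congr rfl fun q _ => by ring
      rw [hsq2]
      rw [← hDt]
      field_simp
      ring
    have hwv : ∑ p, w p ^ 2 ≤ ∑ p, v p ^ 2 := key_quad_bound a b v ha hba hsa
    have hCS : (∑ p, u p * w p) ^ 2 ≤ (∑ p, u p ^ 2) * (∑ p, w p ^ 2) :=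
      Finset.sum_mul_sq_le_sq_mul_sq _ _ _
    have habs : |∑ p, u p * w p| ≤ Real.sqrt (∑ p, u p ^ 2) * Real.sqrt (∑ p, v p ^ 2) := by
      rw [← Real.sqrt_sq_eq_abs, ← Real.sqrt_mul (by positivity)]
      exact Real.sqrt_le_sqrt (hCS.trans (mul_le_mul_of_nonneg_left hwv (by positivity)))
    rw [hform, hC, abs_mul, abs_of_pos (by positivity : (0:ℝ) < 1 / τ)]
    exact mul_le_mul_of_nonneg_left habs (by positivity)
  -- mean value theorem
  have hMVT : ‖φ 1 - φ 0‖ ≤ C :=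
    norm_image_sub_le_of_norm_deriv_le_segment_01'
      (fun t _ => (hderiv t).hasDerivWithinAt) (fun t _ => hbound t)
  have hz1 : z 1 = x := funext fun p => by simp [hz, hv]
  have hz0 : z 0 = y := funext fun p => by simp [hz]
  have hval : φ 1 - φ 0 = ∑ p, u p ^ 2 := by
    rw [hφ]
    simp only [hz1, hz0]
    rw [← Finset.sum_sub_distrib]
    refine Finset.sum_congr rfl fun p _ => ?_
    rw [hu]; ring
  have hfinal : ∑ p, u p ^ 2 ≤ C := by
    rw [← hval]
    exact (le_abs_self _).trans hMVT
  set A : ℝ := Real.sqrt (∑ p, u p ^ 2) with hA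
  set B : ℝ := Real.sqrt (∑ p, v p ^ 2) with hB
  have hAsq : ∑ p, u p ^ 2 = A ^ 2 := (Real.sq_sqrt (by positivity)).symm
  rw [hAsq, hC] at hfinal
  by_cases hA0 : A = 0
  · rw [hA0]; positivity
  · have hApos : 0 < A := lt_of_le_of_ne (Real.sqrt_nonneg _) (Ne.symm hA0)
    have hBpos : 0 ≤ B := Real.sqrt_nonneg _
    nlinarith [hfinal, hApos, hBpos, hτ]

end aux

/-- For m, n ≥ 1 and τ > 0, the gradient of the logsumexp
function is Lipschitz with constant 1/τ in the Frobenius norm. -/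
theorem logSumExp_grad_lipschitz (m n : ℕ) (hm : 1 ≤ m) (hn : 1 ≤ n) (τ : ℝ) (hτ : 0 < τ)
    (X Y : Matrix (Fin m) (Fin n) ℝ) :
    frobNorm (logSumExpGrad τ X - logSumExpGrad τ Y) ≤ (1 / τ) * frobNorm (X - Y) := by
  haveI : Nonempty (Fin m × Fin n) := ⟨(⟨0, hm⟩, ⟨0, hn⟩)⟩
  set x : Fin m × Fin n → ℝ := fun p => X p.1 p.2 with hx
  set y : Fin m × Fin n → ℝ := fun p => Y p.1 p.2 with hy
  have hGX : ∀ i j, logSumExpGrad τ X i j = gfun τ x (i, j) := by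
    intro i j
    unfold logSumExpGrad gfun Dfun
    rw [Fintype.sum_prod_type]
  have hGY : ∀ i j, logSumExpGrad τ Y i j = gfun τ y (i, j) := by
    intro i j
    unfold logSumExpGrad gfun Dfun
    rw [Fintype.sum_prod_type]
  have hfrob1 : frobNorm (logSumExpGrad τ X - logSumExpGrad τ Y)
      = Real.sqrt (∑ p : Fin m × Fin n, (gfun τ x p - gfun τ y p) ^ 2) := by
    unfold frobNorm
    congr 1
    rw [Fintype.sum_prod_type]
    refine Finset.sum_congr rfl fun i _ => Finset.sum_congr rfl fun j _ => ?_
    rw [Matrix.sub_apply, hGX, hGY]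
  have hfrob2 : frobNorm (X - Y)
      = Real.sqrt (∑ p : Fin m × Fin n, (x p - y p) ^ 2) := by
    unfold frobNorm
    congr 1
    rw [Fintype.sum_prod_type]
    refine Finset.sum_congr rfl fun i _ => Finset.sum_congr rfl fun j _ => ?_
    rw [Matrix.sub_apply]
  rw [hfrob1, hfrob2]
  exact grad_lip τ hτ x y
end
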